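/- If A = {A_x} is an atomic observable measured by some instrument 𝓘, and B, C are observables such that B = (B₁|A) and C = (C₁|A) for some observables B₁, C₁ (conditioning relative to 𝓘), then B and C are jointly commuting, i.e., all effects B_y and C_z mutually commute. -/

import Mathlib

open scoped ComplexOrder

open Matrix BigOperators

/-- An effect on a finite-dimensional Hilbert space: `0 ≤ a ≤ I`. -/
def IsEffect {n : ℕ} (a : Matrix (Fin n) (Fin n) ℂ) : Prop :=
  a.PosSemidef ∧ (1 - a).PosSemidef

/-- A state: positive operator of trace one. -/
def IsState {n : ℕ} (ρ : Matrix (Fin n) (Fin n) ℂ) : Prop :=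
  ρ.PosSemidef ∧ ρ.trace = 1

private lemma matrix_eq_zero_of_mulVec {n : ℕ} {M : Matrix (Fin n) (Fin n) ℂ}
    (h : ∀ w, M *ᵥ w = 0) : M = 0 := by
  ext i j
  have := congrFun (h (Pi.single j 1)) i
  simpa using this

private lemma psd_add_eq_zero {n : ℕ} {M N : Matrix (Fin n) (Fin n) ℂ}
    (hM : M.PosSemidef) (hN : N.PosSemidef) (h : M + N = 0) : M = 0 := by
  apply matrix_eq_zero_of_mulVec
  intro w
  have h1 : star w ⬝ᵥ M *ᵥ w + star w ⬝ᵥ N *ᵥ w = 0 := by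
    rw [← dotProduct_add, ← add_mulVec, h, zero_mulVec, dotProduct_zero]
  have hz : star w ⬝ᵥ M *ᵥ w = 0 :=
    ((add_eq_zero_iff_of_nonneg (hM.dotProduct_mulVec_nonneg w) (hN.dotProduct_mulVec_nonneg w)).mp h1).1
  exact (hM.dotProduct_mulVec_zero_iff w).mp hz

private lemma rank_one_sandwich {n : ℕ} {P : Matrix (Fin n) (Fin n) ℂ}
    (hrank : P.rank = 1) (M : Matrix (Fin n) (Fin n) ℂ) :
    ∃ c : ℂ, P * M * P = c • P := by
  rw [Matrix.rank] at hrank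
  obtain ⟨v, hv0, hv⟩ := finrank_eq_one_iff'.mp hrank
  choose c hc using fun j => hv ⟨P *ᵥ Pi.single j 1, LinearMap.mem_range_self _ _⟩
  have hcol : ∀ j i, P i j = c j * (v : Fin n → ℂ) i := by
    intro j i
    have h1 : c j • (v : Fin n → ℂ) = P *ᵥ Pi.single j 1 :=
      congrArg Subtype.val (hc j)
    have := congrFun h1 i
    simp only [Pi.smul_apply, smul_eq_mul, mulVec_single_one, col_apply, mul_one] at this
    exact this.symm
  refine ⟨∑ k, ∑ l, c k * M k l * (v : Fin n → ℂ) l, ?_⟩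
  ext i j
  simp only [mul_apply, Matrix.smul_apply, smul_eq_mul, hcol, Finset.sum_mul, Finset.mul_sum]
  rw [Finset.sum_comm]
  refine Finset.sum_congr rfl fun l _ => ?_
  refine Finset.sum_congr rfl fun k _ => ?_
  ring

private lemma proj_psd {n : ℕ} {P : Matrix (Fin n) (Fin n) ℂ}
    (hh : P.IsHermitian) (hi : P * P = P) : P.PosSemidef := by
  have : P = Pᴴ * P := by rw [hh.eq, hi]
  exact this ▸ Matrix.posSemidef_conjTranspose_mul_self P

private lemma proj_orthogonal {n : ℕ} {X : Type*} [Fintype X]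
    {A : X → Matrix (Fin n) (Fin n) ℂ}
    (hherm : ∀ x, (A x).IsHermitian) (hidem : ∀ x, A x * A x = A x)
    (hsum : ∑ x, A x = 1) :
    ∀ x x', x ≠ x' → A x' * A x = 0 := by
  classical
  intro x x' hne
  have hpsd : ∀ x'', (A x * A x'' * A x).PosSemidef := fun x'' => by
    have h0 := proj_psd (hherm x'') (hidem x'')
    simpa [(hherm x).eq] using h0.mul_mul_conjTranspose_same (A x)
  have hsum0 : ∑ x'' ∈ Finset.univ.erase x, A x * A x'' * A x = 0 := by
    have he : ∑ x'' ∈ Finset.univ.erase x, A x'' = 1 - A x := by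
      rw [eq_sub_iff_add_eq, Finset.sum_erase_add _ _ (Finset.mem_univ x), hsum]
    have h1 : A x * (1 - A x) * A x = 0 := by
      rw [mul_sub, mul_one, hidem, sub_self, zero_mul]
    calc ∑ x'' ∈ Finset.univ.erase x, A x * A x'' * A x
        = A x * (∑ x'' ∈ Finset.univ.erase x, A x'') * A x := by
          rw [Finset.mul_sum, Finset.sum_mul]
      _ = 0 := by rw [he, h1]
  have hmem : x' ∈ Finset.univ.erase x := Finset.mem_erase.mpr ⟨hne.symm, Finset.mem_univ _⟩
  have key : A x * A x' * A x = 0 := by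
    apply psd_add_eq_zero (hpsd x')
      (Finset.sum_induction _ _ (fun a b ha hb => ha.add hb) Matrix.PosSemidef.zero
        (fun x'' _ => hpsd x'') : ((Finset.univ.erase x).erase x').sum
          (fun x'' => A x * A x'' * A x) |>.PosSemidef)
    exact (Finset.add_sum_erase _ (fun x'' => A x * A x'' * A x) hmem).trans hsum0
  have he : (A x' * A x)ᴴ * (A x' * A x) = 0 := by
    rw [conjTranspose_mul, (hherm x).eq, (hherm x').eq]
    calc A x * A x' * (A x' * A x) = A x * (A x' * A x') * A x := by
          simp only [mul_assoc]
      _ = A x * A x' * A x := by rw [hidem]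
      _ = 0 := key
  exact Matrix.conjTranspose_mul_self_eq_zero.mp he

private lemma scalar_of_le_proj {n : ℕ} {P T : Matrix (Fin n) (Fin n) ℂ}
    (hherm : P.IsHermitian) (hidem : P * P = P) (hrank : P.rank = 1)
    (hT : T.PosSemidef) (hPT : (P - T).PosSemidef) :
    ∃ c : ℂ, T = c • P := by
  have hker : ∀ w, T *ᵥ ((1 - P) *ᵥ w) = 0 := by
    intro w
    set u := (1 - P) *ᵥ w with hu
    have hP1 : P * (1 - P) = 0 := by rw [mul_sub, mul_one, hidem, sub_self]
    have hPu : P *ᵥ u = 0 := by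
      rw [hu, mulVec_mulVec, hP1, zero_mulVec]
    have hb := hPT.dotProduct_mulVec_nonneg u
    rw [sub_mulVec, dotProduct_sub, hPu, dotProduct_zero, zero_sub, le_neg, neg_zero] at hb
    exact (hT.dotProduct_mulVec_zero_iff u).mp (le_antisymm hb (hT.dotProduct_mulVec_nonneg u))
  have h2 : T * (1 - P) = 0 := by
    apply matrix_eq_zero_of_mulVec
    intro w
    rw [← mulVec_mulVec]
    exact hker w
  have hTP : T = T * P := by
    rw [mul_sub, mul_one] at h2
    exact sub_eq_zero.mp h2
  have hPT' : T = P * T := by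
    have h3 := congrArg conjTranspose h2
    rw [conjTranspose_mul, conjTranspose_zero, hT.1.eq] at h3
    have h1h : (1 - P)ᴴ = 1 - P := by
      rw [conjTranspose_sub, conjTranspose_one, hherm.eq]
    rw [h1h, sub_mul, one_mul] at h3
    exact sub_eq_zero.mp h3
  have hfix : T = P * T * P := by
    conv_lhs => rw [hTP, hPT']
  obtain ⟨c, hcs⟩ := rank_one_sandwich hrank T
  exact ⟨c, by rw [hfix, ← mul_assoc] at *; rw [hfix]; exact hcs⟩

private lemma diag_mul {n : ℕ} {X : Type*} [Fintype X]
    {A : X → Matrix (Fin n) (Fin n) ℂ}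
    (hidem : ∀ x, A x * A x = A x)
    (horth : ∀ x x', x ≠ x' → A x' * A x = 0)
    (f g : X → ℂ) :
    (∑ x, f x • A x) * (∑ x, g x • A x) = ∑ x, (f x * g x) • A x := by
  rw [Finset.sum_mul_sum]
  rw [Finset.sum_comm]
  refine Finset.sum_congr rfl fun x _ => ?_
  rw [Finset.sum_eq_single x]
  · rw [smul_mul_smul_comm, hidem]
  · intro x' _ hne
    rw [smul_mul_smul_comm, horth x x' hne.symm, smul_zero]
  · intro h; exact absurd (Finset.mem_univ x) h

/-- An atomic effect: a rank-one (orthogonal) projection. -/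
def IsAtomicEffect {n : ℕ} (a : Matrix (Fin n) (Fin n) ℂ) : Prop :=
  a.IsHermitian ∧ a * a = a ∧ a.rank = 1

/-- if `A = {A_x}` is an atomic observable measured by an instrument
`𝓘` (with duals `𝓘_x*`) and `B, C` are observables with `B = (B₁|A)`, `C = (C₁|A)`
for observables `B₁, C₁`, i.e. `B_y = Σ_x 𝓘_x*(B₁_y)` and `C_z = Σ_x 𝓘_x*(C₁_z)`,
then `B` and `C` are jointly commuting. -/
theorem jointly_commuting_of_conditioned {n : ℕ} {X Y Z : Type*}
    [Fintype X] [Fintype Y] [Fintype Z]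
    (I : X → Matrix (Fin n) (Fin n) ℂ →ₗ[ℂ] Matrix (Fin n) (Fin n) ℂ)
    (Id : X → Matrix (Fin n) (Fin n) ℂ →ₗ[ℂ] Matrix (Fin n) (Fin n) ℂ)
    (A : X → Matrix (Fin n) (Fin n) ℂ)
    (hatom : ∀ x, IsAtomicEffect (A x)) (hAsum : ∑ x, A x = 1)
    (hId : ∀ x, ∀ ρ M : Matrix (Fin n) (Fin n) ℂ,
      (I x ρ * M).trace = (ρ * Id x M).trace)
    (hIdpos : ∀ x, ∀ M : Matrix (Fin n) (Fin n) ℂ, M.PosSemidef → (Id x M).PosSemidef)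
    (hmeasI : ∀ x, Id x 1 = A x)
    (B1 : Y → Matrix (Fin n) (Fin n) ℂ) (C1 : Z → Matrix (Fin n) (Fin n) ℂ)
    (hB1 : ∀ y, IsEffect (B1 y)) (hB1sum : ∑ y, B1 y = 1)
    (hC1 : ∀ z, IsEffect (C1 z)) (hC1sum : ∑ z, C1 z = 1)
    (B : Y → Matrix (Fin n) (Fin n) ℂ) (C : Z → Matrix (Fin n) (Fin n) ℂ)
    (hB : ∀ y, B y = ∑ x, Id x (B1 y)) (hC : ∀ z, C z = ∑ x, Id x (C1 z)) :
    (∀ y y', B y * B y' = B y' * B y) ∧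
    (∀ z z', C z * C z' = C z' * C z) ∧
    (∀ y z, B y * C z = C z * B y) := by
  classical
  have hherm : ∀ x, (A x).IsHermitian := fun x => (hatom x).1
  have hidem : ∀ x, A x * A x = A x := fun x => (hatom x).2.1
  have horth := proj_orthogonal hherm hidem hAsum
  have hBcoef : ∀ x y, ∃ c : ℂ, Id x (B1 y) = c • A x := by
    intro x y
    refine scalar_of_le_proj (hherm x) (hidem x) (hatom x).2.2
      (hIdpos x _ (hB1 y).1) ?_
    have h1 : A x - Id x (B1 y) = Id x (1 - B1 y) := by
      rw [map_sub, hmeasI]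
    rw [h1]
    exact hIdpos x _ (hB1 y).2
  have hCcoef : ∀ x z, ∃ c : ℂ, Id x (C1 z) = c • A x := by
    intro x z
    refine scalar_of_le_proj (hherm x) (hidem x) (hatom x).2.2
      (hIdpos x _ (hC1 z).1) ?_
    have h1 : A x - Id x (C1 z) = Id x (1 - C1 z) := by
      rw [map_sub, hmeasI]
    rw [h1]
    exact hIdpos x _ (hC1 z).2
  choose b hb using hBcoef
  choose c hc using hCcoef
  have hBeq : ∀ y, B y = ∑ x, b x y • A x := fun y => by
    rw [hB]; exact Finset.sum_congr rfl fun x _ => hb x y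
  have hCeq : ∀ z, C z = ∑ x, c x z • A x := fun z => by
    rw [hC]; exact Finset.sum_congr rfl fun x _ => hc x z
  refine ⟨fun y y' => ?_, fun z z' => ?_, fun y z => ?_⟩
  · rw [hBeq y, hBeq y', diag_mul hidem horth, diag_mul hidem horth]
    exact Finset.sum_congr rfl fun x _ => by rw [mul_comm]
  · rw [hCeq z, hCeq z', diag_mul hidem horth, diag_mul hidem horth]
    exact Finset.sum_congr rfl fun x _ => by rw [mul_comm]
  · rw [hBeq y, hCeq z, diag_mul hidem horth, diag_mul hidem horth]
    exact Finset.sum_congr rfl fun x _ => by rw [mul_comm]
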